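/- Let A₀, A₁, A₂ be points in the plane, and let U₀ = C(P₀, r₀) and U₁ = C(P₁, r₁) be circles contained in conv{A₀, A₁, A₂}. Then there exist j ∈ {0,1,2} and k ∈ {0,1} such that U_{1-k} ⊆ conv(U_k ∪ ({A₀, A₁, A₂} \ {A_j})). -/

import Mathlib

open scoped RealInnerProductSpace

noncomputable section AB

abbrev E2 := EuclideanSpace ℝ (Fin 2)

lemma inner_formula (x y : E2) : ⟪x, y⟫ = x 0 * y 0 + x 1 * y 1 := by
  simp [PiLp.inner_apply, Fin.sum_univ_two, RCLike.inner_apply, starRingEnd_apply]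
  ring

lemma eq_zero_iff (x : E2) : x = 0 ↔ x 0 = 0 ∧ x 1 = 0 := by
  constructor
  · intro h; rw [h]; exact ⟨rfl, rfl⟩
  · intro h; ext i; fin_cases i <;> simp [h.1, h.2]

lemma dep2 {w x y : E2} (hw : w ≠ 0) (hx : x ≠ 0)
    (hwx : ⟪w, x⟫ = 0) (hwy : ⟪w, y⟫ = 0) : ∃ t : ℝ, y = t • x := by
  rw [inner_formula] at hwx hwy
  have hd : x 0 * y 1 - x 1 * y 0 = 0 := by
    rcases (fun h => hw ((eq_zero_iff w).2 h) : ¬ (w 0 = 0 ∧ w 1 = 0)) with h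
    by_cases h0 : w 0 = 0
    · have h1 : w 1 ≠ 0 := fun h1 => h ⟨h0, h1⟩
      have : w 1 * (x 0 * y 1 - x 1 * y 0) = 0 := by linear_combination x 0 * hwy - y 0 * hwx
      exact (mul_eq_zero.1 this).resolve_left h1
    · have : w 0 * (x 0 * y 1 - x 1 * y 0) = 0 := by linear_combination y 1 * hwx - x 1 * hwy
      exact (mul_eq_zero.1 this).resolve_left h0
  rcases (fun h => hx ((eq_zero_iff x).2 h) : ¬ (x 0 = 0 ∧ x 1 = 0)) with h
  by_cases h0 : x 0 = 0
  · have h1 : x 1 ≠ 0 := fun h1 => h ⟨h0, h1⟩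
    refine ⟨y 1 / x 1, ?_⟩
    ext i; fin_cases i
    · show y 0 = y 1 / x 1 * x 0
      rw [h0, mul_zero]
      have : y 0 = 0 := by
        have := hd; rw [h0] at this
        have : x 1 * y 0 = 0 := by linarith
        exact (mul_eq_zero.1 this).resolve_left h1
      exact this
    · show y 1 = y 1 / x 1 * x 1
      field_simp
  · refine ⟨y 0 / x 0, ?_⟩
    ext i; fin_cases i
    · show y 0 = y 0 / x 0 * x 0
      field_simp
    · show y 1 = y 0 / x 0 * x 1
      rw [div_mul_eq_mul_div, eq_div_iff h0]
      linear_combination hd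

lemma three_on_line {v : E2} (hv : v ≠ 0) {c : ℝ} {e₀ e₁ e₂ : E2}
    (h0 : ‖e₀‖ = 1) (h1 : ‖e₁‖ = 1) (h2 : ‖e₂‖ = 1)
    (hc0 : ⟪v, e₀⟫ = c) (hc1 : ⟪v, e₁⟫ = c) (hc2 : ⟪v, e₂⟫ = c)
    (h01 : e₀ ≠ e₁) (h02 : e₀ ≠ e₂) (h12 : e₁ ≠ e₂)
    (dep2 : ∀ {w x y : E2}, w ≠ 0 → x ≠ 0 → ⟪w, x⟫ = 0 → ⟪w, y⟫ = 0 → ∃ t : ℝ, y = t • x) :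
    False := by
  set w1 := e₁ - e₀ with hw1def
  set w2 := e₂ - e₀ with hw2def
  have hw1 : ⟪v, w1⟫ = 0 := by rw [hw1def, inner_sub_right, hc1, hc0, sub_self]
  have hw2 : ⟪v, w2⟫ = 0 := by rw [hw2def, inner_sub_right, hc2, hc0, sub_self]
  have hw1ne : w1 ≠ 0 := sub_ne_zero.2 (Ne.symm h01)
  obtain ⟨t, ht⟩ := dep2 hv hw1ne hw1 hw2
  have he1 : e₁ = e₀ + w1 := by rw [hw1def]; abel
  have he2 : e₂ = e₀ + t • w1 := by rw [← ht, hw2def]; abel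
  have hA : 2 * ⟪e₀, w1⟫ + ‖w1‖ ^ 2 = 0 := by
    have := norm_add_sq_real e₀ w1
    rw [← he1, h1, h0] at this
    nlinarith
  have hB : 2 * t * ⟪e₀, w1⟫ + t ^ 2 * ‖w1‖ ^ 2 = 0 := by
    have := norm_add_sq_real e₀ (t • w1)
    rw [← he2, h2, h0, real_inner_smul_right, norm_smul, Real.norm_eq_abs] at this
    nlinarith [sq_abs t]
  have hwpos : 0 < ‖w1‖ ^ 2 := pow_pos (norm_pos_iff.2 hw1ne) 2
  have ht01 : t * (t - 1) = 0 := by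
    have h : t * (t - 1) * ‖w1‖ ^ 2 = 0 := by linear_combination hB - t * hA
    exact (mul_eq_zero.1 h).resolve_right hwpos.ne'
  rcases mul_eq_zero.1 ht01 with h | h
  · apply h02
    rw [he2, h, zero_smul, add_zero]
  · apply h12
    rw [he1, he2, show t = 1 by linarith, one_smul]

lemma support_point {P₁ : E2} {r₁ : ℝ} (h : 0 ≤ r₁) {n : E2} (hn : ‖n‖ = 1) :
    P₁ + r₁ • n ∈ Metric.sphere P₁ r₁ := by
  simp [Metric.mem_sphere, dist_eq_norm, norm_smul, hn, abs_of_nonneg h]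

lemma convexHull_sphere_eq (P : E2) (r : ℝ) (hr : 0 ≤ r) :
    convexHull ℝ (Metric.sphere P r) = Metric.closedBall P r := by
  apply Set.Subset.antisymm
  · exact convexHull_min Metric.sphere_subset_closedBall (convex_closedBall P r)
  · intro x hx
    rcases eq_or_lt_of_le hr with h | hrpos
    · have : x = P := by
        have := Metric.mem_closedBall.1 hx
        rw [← h] at this
        have := le_antisymm this dist_nonneg
        exact eq_of_dist_eq_zero this
      rw [this]
      exact subset_convexHull ℝ _ (by simp [Metric.mem_sphere, ← h])
    · set u := x - P with hu
      have hun : ‖u‖ ≤ r := by rw [hu, ← dist_eq_norm]; exact hx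
      obtain ⟨e, hen, hue⟩ : ∃ e : E2, ‖e‖ = 1 ∧ u = ‖u‖ • e := by
        by_cases hu0 : u = 0
        · exact ⟨EuclideanSpace.single 0 1, by simp, by simp [hu0]⟩
        · refine ⟨‖u‖⁻¹ • u, ?_, ?_⟩
          · rw [norm_smul, norm_inv, norm_norm, inv_mul_cancel₀ (norm_ne_zero_iff.2 hu0)]
          · rw [smul_smul, mul_inv_cancel₀ (norm_ne_zero_iff.2 hu0), one_smul]
      set a : ℝ := (‖u‖ / r + 1) / 2 with ha
      have ha0 : 0 ≤ a := by positivity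
      have ha1 : a ≤ 1 := by
        rw [ha]
        have : ‖u‖ / r ≤ 1 := (div_le_one hrpos).2 hun
        linarith
      have hx1 : P + r • e ∈ Metric.sphere P r := by
        simpa using support_point (P₁ := P) hr hen
      have hx2 : P - r • e ∈ Metric.sphere P r := by
        simp [Metric.mem_sphere, dist_eq_norm, norm_smul, hen, abs_of_nonneg hr]
      have hcomb : x = a • (P + r • e) + (1 - a) • (P - r • e) := by
        have h2a : (2 * a - 1) * r = ‖u‖ := by
          rw [ha]; field_simp; ring
        have : x = P + u := by rw [hu]; abel
        rw [this, hue, ← h2a]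
        module
      rw [hcomb]
      exact (convex_convexHull ℝ _) (subset_convexHull ℝ _ hx1) (subset_convexHull ℝ _ hx2)
        ha0 (by linarith) (by ring)

lemma convexJoin_isCompact {K L : Set E2} (hK : IsCompact K) (hL : IsCompact L) :
    IsCompact (convexJoin ℝ K L) := by
  have himg : convexJoin ℝ K L =
      (fun p : ℝ × E2 × E2 => (1 - p.1) • p.2.1 + p.1 • p.2.2) ''
        ((Set.Icc (0:ℝ) 1) ×ˢ (K ×ˢ L)) := by
    ext x
    rw [mem_convexJoin]
    constructor
    · rintro ⟨a, ha, b, hb, hseg⟩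
      rw [segment_eq_image] at hseg
      obtain ⟨θ, hθ, rfl⟩ := hseg
      exact ⟨⟨θ, a, b⟩, ⟨hθ, ha, hb⟩, rfl⟩
    · rintro ⟨⟨θ, a, b⟩, ⟨hθ, ha, hb⟩, rfl⟩
      exact ⟨a, ha, b, hb, by rw [segment_eq_image]; exact ⟨θ, hθ, rfl⟩⟩
  rw [himg]
  apply ((isCompact_Icc).prod (hK.prod hL)).image
  fun_prop

lemma hullS_isClosed (Pk : E2) (rk : ℝ) (hrk : 0 ≤ rk) (F : Set E2) (hF : F.Finite) :
    IsClosed (convexHull ℝ (Metric.sphere Pk rk ∪ F)) := by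
  rcases F.eq_empty_or_nonempty with h | hne
  · rw [h, Set.union_empty, convexHull_sphere_eq _ _ hrk]
    exact Metric.isClosed_closedBall
  · rw [convexHull_union (NormedSpace.sphere_nonempty.2 hrk) hne]
    apply IsCompact.isClosed
    apply convexJoin_isCompact
    · rw [convexHull_sphere_eq _ _ hrk]
      exact isCompact_closedBall _ _
    · exact hF.isCompact_convexHull (𝕜 := ℝ)

lemma key {P₁ : E2} {r₁ : ℝ} (hr₁ : 0 ≤ r₁) {S : Set E2}
    (hS : IsClosed (convexHull ℝ S))
    (h : ∀ n : E2, ‖n‖ = 1 → ∃ z ∈ S, ⟪P₁, n⟫ + r₁ ≤ ⟪z, n⟫) :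
    Metric.sphere P₁ r₁ ⊆ convexHull ℝ S := by
  intro y hy
  by_contra hyC
  obtain ⟨f, u, hfu, huf⟩ :=
    geometric_hahn_banach_closed_point (convex_convexHull ℝ S) hS hyC
  set v : E2 := (InnerProductSpace.toDual ℝ E2).symm f with hv
  have hvf : ∀ x : E2, ⟪v, x⟫ = f x := fun x => InnerProductSpace.toDual_symm_apply
  have hvne : v ≠ 0 := by
    intro h0
    obtain ⟨z, hzS, _⟩ := h (EuclideanSpace.single 0 1) (by simp)
    have h1 : f z < u := hfu z (subset_convexHull ℝ S hzS)
    have h2 : f z = 0 := by rw [← hvf, h0, inner_zero_left]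
    have h3 : f y = 0 := by rw [← hvf, h0, inner_zero_left]
    linarith
  set n : E2 := ‖v‖⁻¹ • v with hn
  have hnorm : ‖n‖ = 1 := by
    rw [hn, norm_smul, norm_inv, norm_norm, inv_mul_cancel₀ (norm_ne_zero_iff.2 hvne)]
  obtain ⟨z, hzS, hz⟩ := h n hnorm
  have hvn : v = ‖v‖ • n := by
    rw [hn, smul_smul, mul_inv_cancel₀ (norm_ne_zero_iff.2 hvne), one_smul]
  have hvpos : (0:ℝ) < ‖v‖ := norm_pos_iff.2 hvne
  have hyP : ‖y - P₁‖ = r₁ := by rw [← dist_eq_norm]; exact hy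
  have hfy : f y ≤ ‖v‖ * (⟪P₁, n⟫ + r₁) := by
    have h1 : ⟪v, y⟫ = ⟪v, P₁⟫ + ⟪v, y - P₁⟫ := by rw [← inner_add_right]; congr 1; abel
    have h2 : ⟪v, y - P₁⟫ ≤ ‖v‖ * r₁ := by
      calc ⟪v, y - P₁⟫ ≤ ‖v‖ * ‖y - P₁‖ := real_inner_le_norm v _
        _ = ‖v‖ * r₁ := by rw [hyP]
    have h3 : ⟪v, P₁⟫ = ‖v‖ * ⟪n, P₁⟫ := by
      conv_lhs => rw [hvn, real_inner_smul_left]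
    rw [real_inner_comm P₁ n] at h3
    rw [← hvf]
    linarith [h1, h2, h3]
  have hfz : ‖v‖ * ⟪z, n⟫ = f z := by
    rw [← hvf z]
    conv_rhs => rw [hvn, real_inner_smul_left]
    rw [real_inner_comm n z]
  have hzu : f z < u := hfu z (subset_convexHull ℝ S hzS)
  have : f y ≤ f z := by
    calc f y ≤ ‖v‖ * (⟪P₁, n⟫ + r₁) := hfy
      _ ≤ ‖v‖ * ⟪z, n⟫ := by apply mul_le_mul_of_nonneg_left hz hvpos.le
      _ = f z := hfz
  linarith

theorem adaricheva_bolat (A : Fin 3 → EuclideanSpace ℝ (Fin 2))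
    (P : Fin 2 → EuclideanSpace ℝ (Fin 2)) (r : Fin 2 → ℝ)
    (hr : ∀ k, 0 ≤ r k)
    (hU : ∀ k, Metric.sphere (P k) (r k) ⊆ convexHull ℝ (Set.range A)) :
    ∃ (j : Fin 3) (k : Fin 2),
      Metric.sphere (P (1 - k)) (r (1 - k)) ⊆
        convexHull ℝ (Metric.sphere (P k) (r k) ∪ (Set.range A \ {A j})) := by
  by_contra hcon
  push_neg at hcon
  have e10 : (1 - 0 : Fin 2) = 1 := rfl
  have e11 : (1 - 1 : Fin 2) = 0 := rfl
  -- support of the triangle dominates supports of the circles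
  have hsupp : ∀ (k : Fin 2) (n : E2), ‖n‖ = 1 → ∃ j : Fin 3, ⟪P k, n⟫ + r k ≤ ⟪A j, n⟫ := by
    intro k n hn
    obtain ⟨j₀, hj₀⟩ := Finite.exists_max (fun j : Fin 3 => (⟪A j, n⟫ : ℝ))
    refine ⟨j₀, ?_⟩
    have hx : P k + r k • n ∈ convexHull ℝ (Set.range A) := hU k (support_point (hr k) hn)
    have hsub : convexHull ℝ (Set.range A) ⊆ {y : E2 | ⟪y, n⟫ ≤ ⟪A j₀, n⟫} := by
      apply convexHull_min
      · rintro _ ⟨i, rfl⟩; exact hj₀ i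
      · intro x hx' y hy' a b ha hb hab
        simp only [Set.mem_setOf_eq] at *
        rw [inner_add_left, real_inner_smul_left, real_inner_smul_left]
        have hM : a * ⟪A j₀, n⟫ + b * ⟪A j₀, n⟫ = ⟪A j₀, n⟫ := by
          rw [← add_mul, hab, one_mul]
        nlinarith [mul_le_mul_of_nonneg_left hx' ha, mul_le_mul_of_nonneg_left hy' hb]
    have hfin := hsub hx
    rw [Set.mem_setOf_eq, inner_add_left, real_inner_smul_left,
      real_inner_self_eq_norm_sq, hn] at hfin
    simpa using hfin
  -- witnesses from failure of the goal
  have hwit : ∀ (k : Fin 2) (j : Fin 3), ∃ n : E2, ‖n‖ = 1 ∧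
      ⟪P k, n⟫ + r k < ⟪P (1 - k), n⟫ + r (1 - k) ∧
      ∀ i : Fin 3, A i ≠ A j → 0 < ⟪A j - A i, n⟫ := by
    intro k j
    have hcl : IsClosed (convexHull ℝ (Metric.sphere (P k) (r k) ∪ (Set.range A \ {A j}))) :=
      hullS_isClosed _ _ (hr k) _ ((Set.finite_range A).diff)
    have hkey : ¬ ∀ n : E2, ‖n‖ = 1 →
        ∃ z ∈ Metric.sphere (P k) (r k) ∪ (Set.range A \ {A j}),
          ⟪P (1 - k), n⟫ + r (1 - k) ≤ ⟪z, n⟫ :=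
      fun hall => hcon j k (key (hr (1 - k)) hcl hall)
    push_neg at hkey
    obtain ⟨n, hn1, hn2⟩ := hkey
    refine ⟨n, hn1, ?_, ?_⟩
    · have hz := hn2 (P k + r k • n) (Or.inl (support_point (hr k) hn1))
      rw [inner_add_left, real_inner_smul_left, real_inner_self_eq_norm_sq, hn1] at hz
      simpa using hz
    · intro i hi
      have hiS := hn2 (A i) (Or.inr ⟨⟨i, rfl⟩, by simpa using hi⟩)
      obtain ⟨i2, hi2⟩ := hsupp (1 - k) n hn1
      have heq : A i2 = A j := by
        by_contra hne
        exact absurd (hn2 (A i2) (Or.inr ⟨⟨i2, rfl⟩, by simpa using hne⟩)) (not_lt.2 hi2)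
      rw [inner_sub_left]
      rw [heq] at hi2
      linarith
  choose n hn1 hn2 hn3 using hwit
  have hpos : ∀ j : Fin 3, r 0 - r 1 < ⟪P 1 - P 0, n 0 j⟫ := by
    intro j
    have h := hn2 0 j
    rw [e10] at h
    rw [inner_sub_left]
    linarith
  have hneg : ∀ j : Fin 3, ⟪P 1 - P 0, n 1 j⟫ < r 0 - r 1 := by
    intro j
    have h := hn2 1 j
    rw [e11] at h
    rw [inner_sub_left]
    linarith
  by_cases hdist : ∀ i j : Fin 3, i ≠ j → A i ≠ A j
  · -- the three vertices are pairwise distinct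
    set v : E2 := P 1 - P 0 with hvdef
    set c : ℝ := r 0 - r 1 with hcdef
    have hIVT : ∀ j : Fin 3, ∃ e : E2, ‖e‖ = 1 ∧
        (∀ i : Fin 3, A i ≠ A j → 0 < ⟪A j - A i, e⟫) ∧ ⟪v, e⟫ = c := by
      intro j
      set Cset : Set E2 := {x | ∀ i : Fin 3, A i ≠ A j → 0 < ⟪A j - A i, x⟫} with hCsetdef
      have hconv : Convex ℝ Cset := by
        intro x hx y hy a b ha hb hab
        intro i hi
        have hx' := hx i hi
        have hy' := hy i hi
        rw [inner_add_right, real_inner_smul_right, real_inner_smul_right]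
        rcases eq_or_lt_of_le ha with h | h
        · have hb1 : b = 1 := by linarith
          rw [← h, hb1]; simpa using hy'
        · have h1 : 0 < a * ⟪A j - A i, x⟫ := mul_pos h hx'
          have h2 : 0 ≤ b * ⟪A j - A i, y⟫ := mul_nonneg hb hy'.le
          linarith
      have h0C : n 0 j ∈ Cset := fun i hi => hn3 0 j i hi
      have h1C : n 1 j ∈ Cset := fun i hi => hn3 1 j i hi
      have hCne0 : ∀ x ∈ Cset, x ≠ 0 := by
        intro x hx h0
        obtain ⟨i0, hi0⟩ : ∃ i : Fin 3, i ≠ j := by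
          by_cases hj : j = 0
          · exact ⟨1, by rw [hj]; decide⟩
          · exact ⟨0, fun hh => hj hh.symm⟩
        have hlt := hx i0 (hdist i0 j hi0)
        rw [h0, inner_zero_right] at hlt
        exact lt_irrefl 0 hlt
      set fmap : E2 → E2 := fun x => ‖x‖⁻¹ • x with hfmapdef
      have hfC : ∀ x ∈ Cset, fmap x ∈ Cset ∧ ‖fmap x‖ = 1 := by
        intro x hx
        have hxne := hCne0 x hx
        constructor
        · intro i hi
          have hlt := hx i hi
          show 0 < ⟪A j - A i, ‖x‖⁻¹ • x⟫
          rw [real_inner_smul_right]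
          exact mul_pos (inv_pos.2 (norm_pos_iff.2 hxne)) hlt
        · show ‖‖x‖⁻¹ • x‖ = 1
          rw [norm_smul, norm_inv, norm_norm, inv_mul_cancel₀ (norm_ne_zero_iff.2 hxne)]
      have hpre : IsPreconnected (fmap '' Cset) := by
        apply (hconv.isPreconnected).image fmap
        rw [hfmapdef]
        apply ContinuousOn.fun_smul
        · exact (continuous_norm.continuousOn).inv₀ (fun x hx => norm_ne_zero_iff.2 (hCne0 x hx))
        · exact continuousOn_id
      have hg : Continuous (fun x : E2 => (⟪v, x⟫ : ℝ)) := by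
        have := (innerSL ℝ v).continuous
        exact this
      have hpre2 : IsPreconnected ((fun x : E2 => (⟪v, x⟫ : ℝ)) '' (fmap '' Cset)) :=
        hpre.image _ hg.continuousOn
      have hmem0 : (⟪v, n 0 j⟫ : ℝ) ∈ (fun x : E2 => (⟪v, x⟫ : ℝ)) '' (fmap '' Cset) := by
        refine ⟨n 0 j, ⟨n 0 j, h0C, ?_⟩, rfl⟩
        show ‖n 0 j‖⁻¹ • n 0 j = n 0 j
        rw [hn1 0 j]; simp
      have hmem1 : (⟪v, n 1 j⟫ : ℝ) ∈ (fun x : E2 => (⟪v, x⟫ : ℝ)) '' (fmap '' Cset) := by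
        refine ⟨n 1 j, ⟨n 1 j, h1C, ?_⟩, rfl⟩
        show ‖n 1 j‖⁻¹ • n 1 j = n 1 j
        rw [hn1 1 j]; simp
      have hcin : c ∈ Set.Icc (⟪v, n 1 j⟫ : ℝ) (⟪v, n 0 j⟫ : ℝ) := ⟨(hneg j).le, (hpos j).le⟩
      obtain ⟨x', hx'mem, hx'val⟩ := hpre2.Icc_subset hmem1 hmem0 hcin
      obtain ⟨x, hxC, rfl⟩ := hx'mem
      exact ⟨fmap x, (hfC x hxC).2, (hfC x hxC).1, hx'val⟩
    choose e he1 he2 he3 using hIVT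
    have hvne : v ≠ 0 := by
      intro h0
      have h1 := hpos 0
      have h2 := hneg 0
      rw [h0, inner_zero_left] at h1 h2
      linarith
    have hdisj : ∀ j j' : Fin 3, j ≠ j' → e j ≠ e j' := by
      intro j j' hjj heq
      have h1 := he2 j j' (hdist j' j (Ne.symm hjj))
      have h2 := he2 j' j (hdist j j' hjj)
      rw [heq] at h1
      rw [inner_sub_left] at h1 h2
      linarith
    exact three_on_line hvne (he1 0) (he1 1) (he1 2) (he3 0) (he3 1) (he3 2)
      (hdisj 0 1 (by decide)) (hdisj 0 2 (by decide)) (hdisj 1 2 (by decide))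
      (fun hw hx h1 h2 => dep2 hw hx h1 h2)
  · push_neg at hdist
    obtain ⟨p, q, hpq, hApq⟩ := hdist
    by_cases hsne : ∃ s : Fin 3, A s ≠ A p
    · -- exactly two distinct vertex values
      obtain ⟨s, hs⟩ := hsne
      set u : E2 := A p - A s with hudef
      have hune : u ≠ 0 := sub_ne_zero.2 (Ne.symm hs)
      set w : E2 := (WithLp.toLp 2 (fun i : Fin 2 => if i = 0 then -(u 1) else u 0) : EuclideanSpace ℝ (Fin 2)) with hwdef
      have hw0 : w 0 = -(u 1) := rfl
      have hw1 : w 1 = u 0 := rfl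
      have hwne : w ≠ 0 := by
        intro h0
        apply hune
        rw [eq_zero_iff] at h0 ⊢
        rw [hw0, hw1] at h0
        exact ⟨h0.2, by linarith [h0.1]⟩
      have huw : ⟪u, w⟫ = 0 := by
        rw [inner_formula, hw0, hw1]; ring
      -- all vertices lie in the line through A s orthogonal to w
      have hcover : ∀ i : Fin 3, A i = A p ∨ A i = A s := by
        have hps : p ≠ s := by rintro rfl; exact hs rfl
        have hqs : q ≠ s := by rintro rfl; exact hs hApq.symm
        intro i
        have h3 : i = p ∨ i = q ∨ i = s := by
          have hi := i.isLt
          have hp := p.isLt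
          have hq := q.isLt
          have hss := s.isLt
          have hpq' : p.val ≠ q.val := fun h => hpq (Fin.ext h)
          have hps' : p.val ≠ s.val := fun h => hps (Fin.ext h)
          have hqs' : q.val ≠ s.val := fun h => hqs (Fin.ext h)
          simp only [Fin.ext_iff]
          omega
        rcases h3 with rfl | rfl | rfl
        · exact Or.inl rfl
        · exact Or.inl hApq.symm
        · exact Or.inr rfl
      have hline : ∀ x ∈ convexHull ℝ (Set.range A), ⟪x - A s, w⟫ = 0 := by
        intro x hx
        have hsub : convexHull ℝ (Set.range A) ⊆ {y : E2 | ⟪y - A s, w⟫ = 0} := by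
          apply convexHull_min
          · rintro _ ⟨i, rfl⟩
            rcases hcover i with h | h
            · rw [h]; exact huw
            · rw [h]; simp
          · intro x₁ hx₁ x₂ hx₂ a b ha hb hab
            simp only [Set.mem_setOf_eq] at *
            have hcomb : (a • x₁ + b • x₂) - A s = a • (x₁ - A s) + b • (x₂ - A s) := by
              have h := hab
              have hmod : a • (x₁ - A s) + b • (x₂ - A s)
                  = a • x₁ + b • x₂ - (a + b) • A s := by module
              rw [hmod, h, one_smul]
            rw [hcomb, inner_add_left, real_inner_smul_left, real_inner_smul_left, hx₁, hx₂]
            ring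
        exact hsub hx
      -- the circles degenerate to points on the line
      set wn : E2 := ‖w‖⁻¹ • w with hwndef
      have hwnorm : ‖wn‖ = 1 := by
        rw [hwndef, norm_smul, norm_inv, norm_norm, inv_mul_cancel₀ (norm_ne_zero_iff.2 hwne)]
      have hww : ⟪wn, w⟫ = ‖w‖ := by
        rw [hwndef, real_inner_smul_left, real_inner_self_eq_norm_sq, sq]
        rw [← mul_assoc, inv_mul_cancel₀ (norm_ne_zero_iff.2 hwne), one_mul]
      have hPk : ∀ k : Fin 2, r k = 0 ∧ ⟪P k - A s, w⟫ = 0 := by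
        intro k
        have hplus := hline (P k + r k • wn) (hU k (support_point (hr k) hwnorm))
        have hminusmem : P k - r k • wn ∈ Metric.sphere (P k) (r k) := by
          simp [Metric.mem_sphere, dist_eq_norm, norm_smul, hwnorm, abs_of_nonneg (hr k)]
        have hminus := hline (P k - r k • wn) (hU k hminusmem)
        have hrk : r k = 0 := by
          have hsub2 : ⟪((P k + r k • wn) - A s) - ((P k - r k • wn) - A s), w⟫ = 0 := by
            rw [inner_sub_left, hplus, hminus, sub_zero]
          rw [show ((P k + r k • wn) - A s) - ((P k - r k • wn) - A s) = (2 * r k) • wn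
            by module] at hsub2
          rw [real_inner_smul_left, hww] at hsub2
          rcases mul_eq_zero.1 hsub2 with h | h
          · linarith
          · exact absurd h (norm_ne_zero_iff.2 hwne)
        refine ⟨hrk, ?_⟩
        have hadd2 : ⟪((P k + r k • wn) - A s) + ((P k - r k • wn) - A s), w⟫ = 0 := by
          rw [inner_add_left, hplus, hminus, add_zero]
        rw [show ((P k + r k • wn) - A s) + ((P k - r k • wn) - A s) = (2:ℝ) • (P k - A s)
          by module] at hadd2
        rw [real_inner_smul_left] at hadd2
        linarith
      have hvw : ⟪w, P 1 - P 0⟫ = 0 := by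
        have hline1 := (hPk 1).2
        have hline0 := (hPk 0).2
        have hd2 : ⟪(P 1 - A s) - (P 0 - A s), w⟫ = 0 := by
          rw [inner_sub_left, hline1, hline0, sub_zero]
        rw [show (P 1 - A s) - (P 0 - A s) = P 1 - P 0 by module] at hd2
        rw [real_inner_comm]
        exact hd2
      have huw' : ⟪w, u⟫ = 0 := by rw [real_inner_comm]; exact huw
      obtain ⟨τ, hτ⟩ := dep2 hwne hune huw' hvw
      have hr0 := (hPk 0).1
      have hr1 := (hPk 1).1
      have hup : 0 < ⟪u, n 0 p⟫ := by
        have := hn3 0 p s hs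
        rwa [hudef]
      have husn : ⟪u, n 0 s⟫ < 0 := by
        have h := hn3 0 s p (Ne.symm hs)
        rw [show A s - A p = -u by rw [hudef]; abel, inner_neg_left] at h
        linarith
      have hp1 := hpos p
      have hs1 := hpos s
      rw [hτ, real_inner_smul_left] at hp1 hs1
      rw [hr0, hr1] at hp1 hs1
      -- hp1 : 0 - 0 < τ * ⟪u, n 0 p⟫, hs1 : 0 - 0 < τ * ⟪u, n 0 s⟫
      nlinarith
    · push_neg at hsne
      -- all vertices are equal
      have h1 := hn2 0 0
      rw [e10] at h1
      obtain ⟨j1, hj1⟩ := hsupp 1 (n 0 0) (hn1 0 0)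
      obtain ⟨j0, hj0⟩ := hsupp 0 (-(n 0 0)) (by rw [norm_neg]; exact hn1 0 0)
      rw [hsne j1] at hj1
      rw [hsne j0] at hj0
      rw [inner_neg_right, inner_neg_right] at hj0
      linarith [hr 0]

end AB
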